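/- Let r ≥ 3, let g₀ ∈ ℂ, and let g : ZMod r → ℂ satisfy gⱼ ≠ g₀ for all j and g_{j+1} ≠ gⱼ for all j. For j ∈ ZMod r define Xⱼ := −((g_{j−1} − g₀)(g_{j+1} − gⱼ)) / ((g₀ − g_{j+1})(gⱼ − g_{j−1})). Let q : ZMod r → ℝ satisfy ∑_{j=1}^{r} qⱼ = 0 and ∑_{m=1}^{r} (∑_{j=1}^{m} qⱼ) · ∏_{j=1}^{m} Xⱼ = 0. Then ∑_{j=1}^{r} qⱼ/(gⱼ − g₀) = 0. -/

import Mathlib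

/-- A real-valued function `q` on the edges at a vertex satisfying the linearized cross-ratio
relations is a discrete holomorphic quadratic differential: `∑ⱼ qⱼ/(gⱼ − g₀) = 0`. -/
theorem stmt_9 (r : ℕ) [NeZero r] (hr : 3 ≤ r) (g₀ : ℂ) (g : ZMod r → ℂ)
    (hg : ∀ j, g j ≠ g₀) (hgg : ∀ j, g (j + 1) ≠ g j)
    (X : ZMod r → ℂ)
    (hX : ∀ j, X j = -((g (j - 1) - g₀) * (g (j + 1) - g j)) /
        ((g₀ - g (j + 1)) * (g j - g (j - 1))))
    (q : ZMod r → ℝ)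
    (hq1 : ∑ j ∈ Finset.Icc 1 r, q (j : ZMod r) = 0)
    (hq2 : ∑ m ∈ Finset.Icc 1 r,
        ((∑ j ∈ Finset.Icc 1 m, q (j : ZMod r) : ℝ) : ℂ) *
          ∏ j ∈ Finset.Icc 1 m, X (j : ZMod r) = 0) :
    ∑ j ∈ Finset.Icc 1 r, (q (j : ZMod r) : ℂ) / (g (j : ZMod r) - g₀) = 0 := by
  obtain ⟨a, ha⟩ : ∃ a : ZMod r → ℂ, ∀ j, a j = g j - g₀ := ⟨_, fun _ => rfl⟩
  have ha0 : ∀ j, a j ≠ 0 := fun j => by rw [ha]; exact sub_ne_zero.mpr (hg j)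
  have hane : ∀ j, a (j + 1) ≠ a j := by
    intro j h
    rw [ha, ha, sub_left_inj] at h
    exact hgg j h
  obtain ⟨b, hb⟩ : ∃ b : ZMod r → ℂ, ∀ j, b j = 1 / a j - 1 / a (j + 1) :=
    ⟨_, fun _ => rfl⟩
  have hb0 : ∀ j, b j ≠ 0 := by
    intro j h
    apply hane j
    rw [hb] at h
    have := sub_eq_zero.mp h
    simp only [one_div] at this
    exact (inv_injective this).symm
  have hXb : ∀ j, X j = b j / b (j - 1) := by
    intro j
    have e1 : (j - 1) + 1 = j := by ring
    rw [hX]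
    have h1 := ha0 j; have h2 := ha0 (j + 1); have h3 := ha0 (j - 1)
    have h4 : a j - a (j - 1) ≠ 0 := by
      have := hane (j - 1); rw [e1] at this; exact sub_ne_zero.mpr this
    have h5 : a (j + 1) - a j ≠ 0 := sub_ne_zero.mpr (hane j)
    have hg1 : g (j - 1) - g₀ = a (j - 1) := (ha _).symm
    have hg2 : g (j + 1) - g j = a (j + 1) - a j := by rw [ha, ha]; ring
    have hg3 : g₀ - g (j + 1) = -(a (j + 1)) := by rw [ha]; ring
    have hg4 : g j - g (j - 1) = a j - a (j - 1) := by rw [ha, ha]; ring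
    rw [hg1, hg2, hg3, hg4, hb j, hb (j - 1), e1]
    field_simp
  -- telescoping product
  have hprod : ∀ m : ℕ, ∏ j ∈ Finset.Icc 1 m, X (j : ZMod r) = b (m : ZMod r) / b 0 := by
    intro m
    induction m with
    | zero => simp [div_self (hb0 0)]
    | succ n ih =>
      rw [Finset.prod_Icc_succ_top (by omega : 1 ≤ n + 1), ih, hXb]
      have hc : ((n + 1 : ℕ) : ZMod r) - 1 = (n : ℕ) := by push_cast; ring
      rw [hc]
      rw [div_mul_div_comm, mul_comm (b ((n : ℕ) : ZMod r)),
        mul_div_mul_right _ _ (hb0 _)]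
  -- rewrite hq2
  have hq2' : ∑ m ∈ Finset.Icc 1 r,
      ((∑ j ∈ Finset.Icc 1 m, q (j : ZMod r) : ℝ) : ℂ) * b (m : ZMod r) = 0 := by
    have h := hq2
    simp only [hprod] at h
    have h0 := hb0 0
    calc ∑ m ∈ Finset.Icc 1 r, ((∑ j ∈ Finset.Icc 1 m, q (j : ZMod r) : ℝ) : ℂ) * b (m : ZMod r)
        = (∑ m ∈ Finset.Icc 1 r, ((∑ j ∈ Finset.Icc 1 m, q (j : ZMod r) : ℝ) : ℂ) *
            (b (m : ZMod r) / b 0)) * b 0 := by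
          rw [Finset.sum_mul]; apply Finset.sum_congr rfl; intro m _; field_simp
      _ = 0 := by rw [h, zero_mul]
  -- Abel summation identity
  have key : ∀ m : ℕ, ∑ j ∈ Finset.Icc 1 m, (q (j : ZMod r) : ℂ) / a (j : ZMod r)
      = ((∑ j ∈ Finset.Icc 1 m, q (j : ZMod r) : ℝ) : ℂ) / a ((m : ℕ) + 1 : ZMod r)
        + ∑ k ∈ Finset.Icc 1 m,
            ((∑ j ∈ Finset.Icc 1 k, q (j : ZMod r) : ℝ) : ℂ) * b (k : ZMod r) := by
    intro m
    induction m with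
    | zero => simp
    | succ n ih =>
      rw [Finset.sum_Icc_succ_top (by omega : 1 ≤ n + 1),
        Finset.sum_Icc_succ_top (by omega : 1 ≤ n + 1),
        Finset.sum_Icc_succ_top (by omega : 1 ≤ n + 1),
        Finset.sum_Icc_succ_top (by omega : 1 ≤ n + 1), ih]
      have hc : ((n + 1 : ℕ) : ZMod r) = ((n : ℕ) : ZMod r) + 1 := by push_cast; ring
      rw [hc, hb]
      rw [Complex.ofReal_add]
      have h1 := ha0 (((n : ℕ) : ZMod r) + 1)
      have h2 := ha0 (((n : ℕ) : ZMod r) + 1 + 1)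
      field_simp
      ring
  have hfin := key r
  rw [hq2'] at hfin
  have hS : ((∑ j ∈ Finset.Icc 1 r, q (j : ZMod r) : ℝ) : ℂ) = 0 := by
    rw [hq1]; simp
  rw [hS, zero_div, add_zero] at hfin
  calc ∑ j ∈ Finset.Icc 1 r, (q (j : ZMod r) : ℂ) / (g (j : ZMod r) - g₀)
      = ∑ j ∈ Finset.Icc 1 r, (q (j : ZMod r) : ℂ) / a (j : ZMod r) := by
        apply Finset.sum_congr rfl; intro j _; rw [ha]
    _ = 0 := hfin
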